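/- There exists a monoid of order five that satisfies the identity x·s·x·t = x·s·x·t·x for all its elements but does not satisfy the identity (x·y)² = x²·y². Concretely, the monoid P₂¹ with elements {1, a, b, c, d} (where c = b·a and d = b²) and multiplication given by: 1 is the identity; a·a = a·b = a·c = a·d = a; b·a = c, b·b = d, b·c = d, b·d = d; c·z = c for all z ∈ {a, b, c, d}; d·z = d for all z ∈ {a, b, c, d}, is such a monoid: it satisfies xsxt = xsxtx, yet (b·a)² = c while b²·a² = d, so (b·a)² ≠ b²·a². -/

import Mathlib

/-- The five-element monoid `P₂¹ = ⟨a, b, 1 ∣ a² = ab = a, b²a = b², b³ = b²⟩`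
with elements `1, a, b, c = b·a, d = b²`. -/
inductive P21 : Type
  | one | a | b | c | d
  deriving DecidableEq

instance : Fintype P21 where
  elems := {P21.one, P21.a, P21.b, P21.c, P21.d}
  complete := by intro x; cases x <;> decide

namespace P21

/-- Multiplication of `P₂¹`. -/
def mul : P21 → P21 → P21
  | one, x => x
  | x, one => x
  | a, _ => a
  | b, a => c
  | b, b => d
  | b, c => d
  | b, d => d
  | c, _ => c
  | d, _ => d

instance : Monoid P21 where
  mul := mul
  one := one
  one_mul := by intro x; cases x <;> rfl
  mul_one := by intro x; cases x <;> rfl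
  mul_assoc := by decide

end P21

theorem stmt12 :
    Fintype.card P21 = 5 ∧
    (∀ x s t : P21, x * s * x * t = x * s * x * t * x) ∧
    P21.c = P21.b * P21.a ∧ P21.d = P21.b ^ 2 ∧
    (P21.b * P21.a) ^ 2 = P21.c ∧ P21.b ^ 2 * P21.a ^ 2 = P21.d ∧
    (P21.b * P21.a) ^ 2 ≠ P21.b ^ 2 * P21.a ^ 2 ∧
    ¬ (∀ x y : P21, (x * y) ^ 2 = x ^ 2 * y ^ 2) := by
  refine ⟨by decide, by decide, by decide, by decide, by decide, by decide, by decide, fun h => by have := h P21.b P21.a; revert this; decide⟩
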